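/- The map P : L^∞(𝕋) → ℂ defined by P(f) = Σ_{k=0}^{∞} f̂(−k)² is a well-defined, orthogonally additive, continuous 2-homogeneous polynomial on the convolution algebra L^∞(𝕋), and neither P nor the restriction of P to C(𝕋) can be expressed in the form P(f) = Φ(f ∗ f) for any continuous linear functional Φ (on L^∞(𝕋), respectively on C(𝕋)). -/

import Mathlib

/- Statement 5: The map `P(f) = Σ_{k≥0} f̂(−k)²` is a well-defined orthogonally additive
continuous 2-homogeneous polynomial on the convolution algebra `L^∞(𝕋)`, and neither `P`
nor its restriction to `C(𝕋)` can be written as `Φ(f ∗ f)` for a continuous linear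
functional `Φ` (on `L^∞(𝕋)`, resp. `C(𝕋)`).
Here `𝕋` is the circle group, realized as `AddCircle 1` with normalized Haar measure. -/

noncomputable section

open MeasureTheory

instance : Fact ((1 : ENNReal) ≤ ⊤) := ⟨le_top⟩

/-- Convolution on the circle group `𝕋 = AddCircle 1` (normalized Haar measure). -/
def tconv (f g : AddCircle (1 : ℝ) → ℂ) : AddCircle (1 : ℝ) → ℂ :=
  fun x => ∫ y, f y * g (x - y) ∂(@AddCircle.haarAddCircle 1 _)


namespace S5
open Complex Filter Finset
open scoped Convolution
abbrev 𝕋 := AddCircle (1 : ℝ)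
abbrev μT : Measure 𝕋 := @AddCircle.haarAddCircle 1 _

lemma ae_norm_le (f : Lp ℂ ⊤ μT) : ∀ᵐ x ∂μT, ‖f x‖ ≤ ‖f‖ := by
  filter_upwards [ae_le_eLpNormEssSup (f := ⇑f) (μ := μT)] with x hx
  have h1 : eLpNormEssSup (⇑f) μT = eLpNorm (⇑f) ⊤ μT := (eLpNorm_exponent_top).symm
  have h2 : eLpNorm (⇑f) ⊤ μT ≠ ⊤ := (Lp.memLp f).eLpNorm_ne_top
  rw [Lp.norm_def]
  calc ‖f x‖ = (‖f x‖₊ : ℝ) := rfl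
  _ ≤ (eLpNorm (⇑f) ⊤ μT).toReal := by
      rw [← ENNReal.coe_toNNReal h2]
      exact_mod_cast ENNReal.toNNReal_mono h2 (h1 ▸ hx)

lemma integrable_Linf (f : Lp ℂ ⊤ μT) : Integrable (⇑f) μT :=
  memLp_one_iff_integrable.mp ((Lp.memLp f).mono_exponent le_top)

lemma fourierCoeff_congr {f g : 𝕋 → ℂ} (h : f =ᵐ[μT] g) (n : ℤ) :
    fourierCoeff f n = fourierCoeff g n :=
  integral_congr_ae (h.mono fun x hx => by simp only []; rw [hx])

lemma integrable_fourier_smul {f : 𝕋 → ℂ} (hf : Integrable f μT) (m : ℤ) :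
    Integrable (fun t => fourier m t • f t) μT := by
  simp_rw [smul_eq_mul]
  exact hf.bdd_mul (fourier m).continuous.aestronglyMeasurable
    (c := 1) (Eventually.of_forall fun x => le_of_eq (Circle.norm_coe _))

lemma fourierCoeff_add' {f g : 𝕋 → ℂ} (hf : Integrable f μT) (hg : Integrable g μT) (n : ℤ) :
    fourierCoeff (f + g) n = fourierCoeff f n + fourierCoeff g n := by
  unfold fourierCoeff
  simp_rw [Pi.add_apply, smul_add]
  exact integral_add (integrable_fourier_smul hf _) (integrable_fourier_smul hg _)

def toL2 (f : Lp ℂ ⊤ μT) : Lp ℂ 2 μT := ((Lp.memLp f).mono_exponent le_top).toLp _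

lemma coe_toL2 (f : Lp ℂ ⊤ μT) : ⇑(toL2 f) =ᵐ[μT] ⇑f := MemLp.coeFn_toLp _

lemma summable_sq_int (f : Lp ℂ ⊤ μT) :
    Summable (fun n : ℤ => ‖fourierCoeff (⇑f) n‖ ^ 2) := by
  have h := (lp.memℓp (fourierBasis.repr (toL2 f))).summable (by norm_num)
  simp_rw [fourierBasis_repr] at h
  have : ∀ n : ℤ, fourierCoeff (⇑(toL2 f)) n = fourierCoeff (⇑f) n :=
    fun n => fourierCoeff_congr (coe_toL2 f) n
  simp_rw [this] at h
  convert h using 2 with n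
  rw [ENNReal.toReal_ofNat, Real.rpow_two]

lemma tsum_sq_le (f : Lp ℂ ⊤ μT) :
    ∑' n : ℤ, ‖fourierCoeff (⇑f) n‖ ^ 2 ≤ ‖f‖ ^ 2 := by
  have hcongr : ∀ n : ℤ, fourierCoeff (⇑(toL2 f)) n = fourierCoeff (⇑f) n :=
    fun n => fourierCoeff_congr (coe_toL2 f) n
  have hP := tsum_sq_fourierCoeff (toL2 f)
  simp_rw [hcongr] at hP
  rw [hP]
  have : ∫ t, ‖(toL2 f) t‖ ^ 2 ∂μT ≤ ∫ _t, ‖f‖ ^ 2 ∂μT := by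
    refine integral_mono_of_nonneg (Eventually.of_forall fun t => by positivity)
      (integrable_const _) ?_
    filter_upwards [coe_toL2 f, ae_norm_le f] with x hx hle
    rw [hx]
    exact pow_le_pow_left₀ (norm_nonneg _) hle 2
  simpa [measure_univ] using this
lemma neg_cast_inj : Function.Injective (fun k : ℕ => -(k : ℤ)) := fun a b h => by
  simpa using h

lemma summable_sq_nat (f : Lp ℂ ⊤ μT) :
    Summable (fun k : ℕ => ‖fourierCoeff (⇑f) (-(k : ℤ))‖ ^ 2) :=
  (summable_sq_int f).comp_injective neg_cast_inj

lemma tsum_sq_nat_le (f : Lp ℂ ⊤ μT) :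
    ∑' k : ℕ, ‖fourierCoeff (⇑f) (-(k : ℤ))‖ ^ 2 ≤ ‖f‖ ^ 2 :=
  le_trans
    (Summable.tsum_le_tsum_of_inj _ neg_cast_inj (fun c _ => by positivity) (fun b => le_rfl)
      (summable_sq_nat f) (summable_sq_int f))
    (tsum_sq_le f)

lemma summable_mul_norm (f g : Lp ℂ ⊤ μT) :
    Summable (fun k : ℕ => ‖fourierCoeff (⇑f) (-(k : ℤ)) * fourierCoeff (⇑g) (-(k : ℤ))‖) := by
  refine Summable.of_nonneg_of_le (fun k => norm_nonneg _) (fun k => ?_)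
    (((summable_sq_nat f).add (summable_sq_nat g)).mul_left (1/2))
  rw [norm_mul]
  set a := ‖fourierCoeff (⇑f) (-(k : ℤ))‖
  set b := ‖fourierCoeff (⇑g) (-(k : ℤ))‖
  nlinarith [sq_nonneg (a - b), norm_nonneg (fourierCoeff (⇑f) (-(k : ℤ))),
    norm_nonneg (fourierCoeff (⇑g) (-(k : ℤ)))]

lemma summable_mul (f g : Lp ℂ ⊤ μT) :
    Summable (fun k : ℕ => fourierCoeff (⇑f) (-(k : ℤ)) * fourierCoeff (⇑g) (-(k : ℤ))) :=
  (summable_mul_norm f g).of_norm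

def Bfun (f g : Lp ℂ ⊤ μT) : ℂ :=
  ∑' k : ℕ, fourierCoeff (⇑f) (-(k : ℤ)) * fourierCoeff (⇑g) (-(k : ℤ))

lemma coeff_add (f f' : Lp ℂ ⊤ μT) (n : ℤ) :
    fourierCoeff (⇑(f + f')) n = fourierCoeff (⇑f) n + fourierCoeff (⇑f') n := by
  rw [fourierCoeff_congr (Lp.coeFn_add f f') n]
  exact fourierCoeff_add' (integrable_Linf f) (integrable_Linf f') n

lemma coeff_smul (c : ℂ) (f : Lp ℂ ⊤ μT) (n : ℤ) :
    fourierCoeff (⇑(c • f)) n = c * fourierCoeff (⇑f) n := by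
  rw [fourierCoeff_congr (Lp.coeFn_smul c f) n]
  exact fourierCoeff.const_smul (⇑f) c n

def Bl : Lp ℂ ⊤ μT →ₗ[ℂ] Lp ℂ ⊤ μT →ₗ[ℂ] ℂ :=
  LinearMap.mk₂ ℂ Bfun
    (fun f f' g => by
      unfold Bfun
      simp_rw [coeff_add, add_mul]
      exact Summable.tsum_add (summable_mul f g) (summable_mul f' g))
    (fun c f g => by
      unfold Bfun
      simp_rw [coeff_smul, smul_eq_mul, mul_assoc]
      exact tsum_mul_left)
    (fun f g g' => by
      unfold Bfun
      simp_rw [coeff_add, mul_add]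
      exact Summable.tsum_add (summable_mul f g) (summable_mul f g'))
    (fun c f g => by
      unfold Bfun
      simp_rw [coeff_smul, smul_eq_mul]
      simp_rw [mul_left_comm _ c]
      exact tsum_mul_left)

lemma Bl_bound_sq (f g : Lp ℂ ⊤ μT) : ‖Bl f g‖ ≤ (‖f‖ ^ 2 + ‖g‖ ^ 2) / 2 := by
  have h1 : ‖Bl f g‖ ≤ ∑' k : ℕ, ‖fourierCoeff (⇑f) (-(k : ℤ)) * fourierCoeff (⇑g) (-(k : ℤ))‖ :=
    norm_tsum_le_tsum_norm (summable_mul_norm f g)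
  refine h1.trans ?_
  have h2 : ∀ k : ℕ, ‖fourierCoeff (⇑f) (-(k : ℤ)) * fourierCoeff (⇑g) (-(k : ℤ))‖ ≤
      (‖fourierCoeff (⇑f) (-(k : ℤ))‖ ^ 2 + ‖fourierCoeff (⇑g) (-(k : ℤ))‖ ^ 2) / 2 := by
    intro k
    rw [norm_mul]
    nlinarith [sq_nonneg (‖fourierCoeff (⇑f) (-(k : ℤ))‖ - ‖fourierCoeff (⇑g) (-(k : ℤ))‖)]
  calc ∑' k : ℕ, ‖fourierCoeff (⇑f) (-(k : ℤ)) * fourierCoeff (⇑g) (-(k : ℤ))‖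
      ≤ ∑' k : ℕ, (‖fourierCoeff (⇑f) (-(k : ℤ))‖ ^ 2 + ‖fourierCoeff (⇑g) (-(k : ℤ))‖ ^ 2) / 2 :=
        Summable.tsum_le_tsum h2 (summable_mul_norm f g)
          (((summable_sq_nat f).add (summable_sq_nat g)).div_const 2)
    _ = (∑' k : ℕ, ‖fourierCoeff (⇑f) (-(k : ℤ))‖ ^ 2
          + ∑' k : ℕ, ‖fourierCoeff (⇑g) (-(k : ℤ))‖ ^ 2) / 2 := by
        rw [tsum_div_const, Summable.tsum_add (summable_sq_nat f) (summable_sq_nat g)]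
    _ ≤ (‖f‖ ^ 2 + ‖g‖ ^ 2) / 2 := by
        have := tsum_sq_nat_le f; have := tsum_sq_nat_le g; linarith

lemma Bl_bound (f g : Lp ℂ ⊤ μT) : ‖Bl f g‖ ≤ 1 * ‖f‖ * ‖g‖ := by
  rcases eq_or_ne f 0 with rfl | hf
  · simp [map_zero]
  rcases eq_or_ne g 0 with rfl | hg
  · simp [map_zero]
  have hfn : (0:ℝ) < ‖f‖ := norm_pos_iff.mpr hf
  have hgn : (0:ℝ) < ‖g‖ := norm_pos_iff.mpr hg
  have key := Bl_bound_sq (((‖f‖:ℂ))⁻¹ • f) (((‖g‖:ℂ))⁻¹ • g)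
  have hnf : ‖((‖f‖:ℂ))⁻¹ • f‖ = 1 := by
    rw [norm_smul, norm_inv, Complex.norm_real, Real.norm_eq_abs, abs_of_pos hfn,
      inv_mul_cancel₀ hfn.ne']
  have hng : ‖((‖g‖:ℂ))⁻¹ • g‖ = 1 := by
    rw [norm_smul, norm_inv, Complex.norm_real, Real.norm_eq_abs, abs_of_pos hgn,
      inv_mul_cancel₀ hgn.ne']
  rw [hnf, hng] at key
  norm_num at key
  have h2 := mul_le_mul_of_nonneg_left key (by positivity : (0:ℝ) ≤ ‖f‖ * ‖g‖)
  rw [mul_one] at h2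
  calc ‖Bl f g‖ = ‖f‖ * ‖g‖ * (‖g‖⁻¹ * (‖f‖⁻¹ * ‖Bl f g‖)) := by
        field_simp
    _ ≤ ‖f‖ * ‖g‖ := h2
    _ = 1 * ‖f‖ * ‖g‖ := by ring

def φB : Lp ℂ ⊤ μT →L[ℂ] Lp ℂ ⊤ μT →L[ℂ] ℂ := LinearMap.mkContinuous₂ Bl 1 Bl_bound

lemma φB_apply (f g : Lp ℂ ⊤ μT) : φB f g = Bfun f g := rfl
lemma fourier_arg_add (m : ℤ) (a b : 𝕋) : fourier m (a + b) = fourier m a * fourier m b := by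
  simp only [fourier_apply, smul_add, AddCircle.toCircle_add, Circle.coe_mul]

lemma mulL_conv_eq (f g : 𝕋 → ℂ) (x : 𝕋) :
    (f ⋆[ContinuousLinearMap.mul ℂ ℂ, μT] g) x = tconv f g x := rfl

lemma conv_coeff {f g : 𝕋 → ℂ} (hf : Integrable f μT) (hg : Integrable g μT) (n : ℤ) :
    fourierCoeff (tconv f g) n = fourierCoeff f n * fourierCoeff g n := by
  set e : 𝕋 → ℂ := fun t => fourier (-n) t with he
  have hbd : ∀ᵐ x ∂μT, ‖e x‖ ≤ 1 := Eventually.of_forall fun x => le_of_eq (Circle.norm_coe _)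
  have hme : AEStronglyMeasurable e μT := (fourier (-n)).continuous.aestronglyMeasurable
  have hF : Integrable (fun t => e t * f t) μT := hf.bdd_mul hme hbd
  have hG : Integrable (fun t => e t * g t) μT := hg.bdd_mul hme hbd
  have key : ∀ x : 𝕋, e x * tconv f g x
      = ((fun t => e t * f t) ⋆[ContinuousLinearMap.mul ℂ ℂ, μT] (fun t => e t * g t)) x := by
    intro x
    rw [mulL_conv_eq]
    unfold tconv
    rw [← integral_const_mul]
    refine integral_congr_ae (Eventually.of_forall fun y => ?_)
    have : e x = e y * e (x - y) := by
      rw [he]; simp only []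
      rw [← fourier_arg_add, add_sub_cancel]
    rw [this]; ring
  have h1 : fourierCoeff (tconv f g) n = ∫ x, e x * tconv f g x ∂μT := by
    unfold fourierCoeff
    exact integral_congr_ae (Eventually.of_forall fun x => smul_eq_mul _ _)
  rw [h1]
  simp_rw [key]
  rw [integral_convolution (ContinuousLinearMap.mul ℂ ℂ) hF hG]
  have h2 : ∫ x, e x * f x ∂μT = fourierCoeff f n := by
    unfold fourierCoeff
    exact integral_congr_ae (Eventually.of_forall fun x => (smul_eq_mul _ _).symm)
  have h3 : ∫ x, e x * g x ∂μT = fourierCoeff g n := by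
    unfold fourierCoeff
    exact integral_congr_ae (Eventually.of_forall fun x => (smul_eq_mul _ _).symm)
  rw [ContinuousLinearMap.mul_apply', h2, h3]

lemma conv_coeff_zero {f g : Lp ℂ ⊤ μT} (h : tconv (⇑f) (⇑g) =ᵐ[μT] 0) (n : ℤ) :
    fourierCoeff (⇑f) n * fourierCoeff (⇑g) n = 0 := by
  rw [← conv_coeff (integrable_Linf f) (integrable_Linf g), fourierCoeff_congr h]
  simp [fourierCoeff]
lemma exp_ne_one (θ : ℝ) (h0 : 0 < θ) (hπ : θ ≤ Real.pi) :
    Complex.exp (θ * Complex.I) ≠ 1 := by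
  intro h
  rw [Complex.exp_eq_one_iff] at h
  obtain ⟨n, hn⟩ := h
  rw [show ((n:ℂ) * (2 * (Real.pi:ℂ) * Complex.I)) = (((n:ℝ) * (2*Real.pi) : ℝ):ℂ) * Complex.I
    from by push_cast; ring] at hn
  have hθn : θ = (n:ℝ) * (2*Real.pi) := by
    exact_mod_cast mul_right_cancel₀ Complex.I_ne_zero hn
  have hpi := Real.pi_pos
  rcases (by omega : (1:ℤ) ≤ n ∨ n ≤ 0) with h | h
  · have : (1:ℝ) ≤ (n:ℝ) := by exact_mod_cast h
    nlinarith
  · have : (n:ℝ) ≤ 0 := by exact_mod_cast h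
    nlinarith

lemma norm_exp_theta_sub_one (θ : ℝ) (h0 : 0 ≤ θ) (hπ : θ ≤ Real.pi) :
    2*θ/Real.pi ≤ ‖Complex.exp (θ * Complex.I) - 1‖ := by
  have hpi := Real.pi_pos
  have hre : Complex.exp ((θ:ℂ) * Complex.I) - 1
      = ((Real.cos θ - 1 : ℝ) : ℂ) + ((Real.sin θ : ℝ) : ℂ) * Complex.I := by
    rw [Complex.exp_mul_I, ← Complex.ofReal_cos, ← Complex.ofReal_sin]
    push_cast
    ring
  rw [hre, Complex.norm_add_mul_I]
  have hs : 0 ≤ Real.sin (θ/2) :=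
    Real.sin_nonneg_of_nonneg_of_le_pi (by linarith) (by linarith)
  have h2 : Real.sin (θ/2)^2 = (1 - Real.cos θ)/2 := by
    have h := Real.sin_sq_eq_half_sub (θ/2)
    rw [show 2*(θ/2) = θ by ring] at h
    linarith
  have hkey : (Real.cos θ - 1)^2 + (Real.sin θ)^2 = (2 * Real.sin (θ/2))^2 := by
    have h1 := Real.sin_sq_add_cos_sq θ
    nlinarith
  rw [hkey, Real.sqrt_sq (by linarith)]
  have hj := Real.mul_le_sin (x := θ/2) (by linarith) (by linarith)
  calc 2*θ/Real.pi = 2*(2/Real.pi*(θ/2)) := by ring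
  _ ≤ 2*Real.sin (θ/2) := by linarith

lemma geom_bound (θ : ℝ) (h0 : 0 < θ) (hπ : θ ≤ Real.pi) (j : ℕ) :
    ‖∑ i ∈ Finset.range j, Complex.exp ((((i:ℝ)+1)*θ : ℝ) * Complex.I)‖ ≤ Real.pi/θ := by
  have hpi := Real.pi_pos
  set z : ℂ := Complex.exp ((θ:ℂ) * Complex.I) with hzdef
  have hz : ∀ i : ℕ, Complex.exp ((((i:ℝ)+1)*θ:ℝ) * Complex.I) = z^(i+1) := by
    intro i
    rw [hzdef, ← Complex.exp_nat_mul]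
    congr 1
    push_cast
    ring
  simp_rw [hz]
  have hz1 : z ≠ 1 := exp_ne_one θ h0 hπ
  have hgeom : ∑ i ∈ Finset.range j, z^(i+1) = z * ((z^j - 1)/(z-1)) := by
    rw [← geom_sum_eq hz1, Finset.mul_sum]
    exact Finset.sum_congr rfl fun i _ => (pow_succ' z i)
  rw [hgeom, norm_mul, norm_div]
  have hzn : ‖z‖ = 1 := Complex.norm_exp_ofReal_mul_I θ
  have hzj : ‖z^j - 1‖ ≤ 2 := by
    calc ‖z^j - 1‖ ≤ ‖z^j‖ + ‖(1:ℂ)‖ := norm_sub_le _ _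
    _ ≤ 2 := by rw [norm_pow, hzn]; norm_num
  have hlow := norm_exp_theta_sub_one θ h0.le hπ
  have h2θπ : (0:ℝ) < 2*θ/Real.pi := by positivity
  rw [hzn, one_mul]
  calc ‖z^j - 1‖/‖z - 1‖ ≤ 2/(2*θ/Real.pi) := div_le_div₀ (by norm_num) hzj h2θπ hlow
  _ = Real.pi/θ := by field_simp

lemma telescope (f : ℕ → ℝ) (M K : ℕ) (h : M ≤ K) :
    ∑ i ∈ Finset.Ico M K, (f i - f (i+1)) = f M - f K := by
  rw [Finset.sum_Ico_eq_sub _ h, Finset.sum_range_sub' f, Finset.sum_range_sub' f]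
  ring

lemma tail_bound (θ : ℝ) (h0 : 0 < θ) (hπ : θ ≤ Real.pi) (M N : ℕ) (hMN : M < N)
    (hM : 1/θ ≤ (M:ℝ)+1) :
    ‖∑ i ∈ Finset.Ico M N, (1/((i:ℝ)+1)) • Complex.exp ((((i:ℝ)+1)*θ:ℝ) * Complex.I)‖
      ≤ 2*Real.pi := by
  have hpi := Real.pi_pos
  set f : ℕ → ℝ := fun i => 1/((i:ℝ)+1) with hf
  set g : ℕ → ℂ := fun i => Complex.exp ((((i:ℝ)+1)*θ:ℝ) * Complex.I) with hg
  have hG : ∀ j : ℕ, ‖∑ i ∈ Finset.range j, g i‖ ≤ Real.pi/θ := fun j => geom_bound θ h0 hπ j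
  have hfnonneg : ∀ i : ℕ, 0 ≤ f i := fun i => by rw [hf]; positivity
  have hfmono : ∀ i : ℕ, f (i+1) ≤ f i := by
    intro i
    rw [hf]
    apply div_le_div_of_nonneg_left (by norm_num) (by positivity)
    push_cast
    linarith
  rw [Finset.sum_Ico_by_parts f g hMN]
  -- bound the three pieces
  have h1 : ‖f (N-1) • ∑ i ∈ range N, g i‖ ≤ f (N-1) * (Real.pi/θ) := by
    rw [norm_smul, Real.norm_eq_abs, _root_.abs_of_nonneg (hfnonneg _)]
    exact mul_le_mul_of_nonneg_left (hG N) (hfnonneg _)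
  have h2 : ‖f M • ∑ i ∈ range M, g i‖ ≤ f M * (Real.pi/θ) := by
    rw [norm_smul, Real.norm_eq_abs, _root_.abs_of_nonneg (hfnonneg _)]
    exact mul_le_mul_of_nonneg_left (hG M) (hfnonneg _)
  have h3 : ‖∑ i ∈ Finset.Ico M (N-1), (f (i+1) - f i) • ∑ j ∈ range (i+1), g j‖
      ≤ (f M - f (N-1)) * (Real.pi/θ) := by
    calc ‖∑ i ∈ Finset.Ico M (N-1), (f (i+1) - f i) • ∑ j ∈ range (i+1), g j‖
        ≤ ∑ i ∈ Finset.Ico M (N-1), ‖(f (i+1) - f i) • ∑ j ∈ range (i+1), g j‖ :=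
          norm_sum_le _ _
      _ ≤ ∑ i ∈ Finset.Ico M (N-1), (f i - f (i+1)) * (Real.pi/θ) := by
          refine Finset.sum_le_sum fun i _ => ?_
          rw [norm_smul, Real.norm_eq_abs, abs_sub_comm, _root_.abs_of_nonneg
            (by linarith [hfmono i])]
          exact mul_le_mul_of_nonneg_left (hG _) (by linarith [hfmono i])
      _ = (f M - f (N-1)) * (Real.pi/θ) := by
          rw [← Finset.sum_mul, telescope f M (N-1) (by omega)]
  have hfM : f M ≤ θ := by
    rw [hf]
    simp only []
    rw [div_le_iff₀ (by positivity)]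
    rw [div_le_iff₀ h0] at hM
    linarith [hM]
  have hfle : f (N-1) ≤ f M := by
    rw [hf]
    apply div_le_div_of_nonneg_left (by norm_num) (by positivity)
    have : (M:ℝ) ≤ ((N-1:ℕ):ℝ) := by exact_mod_cast Nat.le_sub_one_of_lt hMN
    linarith
  have htot : ‖f (N-1) • ∑ i ∈ range N, g i - f M • ∑ i ∈ range M, g i
      - ∑ i ∈ Finset.Ico M (N-1), (f (i+1) - f i) • ∑ j ∈ range (i+1), g j‖
      ≤ f (N-1) * (Real.pi/θ) + f M * (Real.pi/θ) + (f M - f (N-1)) * (Real.pi/θ) := by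
    calc _ ≤ ‖f (N-1) • ∑ i ∈ range N, g i - f M • ∑ i ∈ range M, g i‖
        + ‖∑ i ∈ Finset.Ico M (N-1), (f (i+1) - f i) • ∑ j ∈ range (i+1), g j‖ :=
          norm_sub_le _ _
    _ ≤ _ := by
        have := norm_sub_le (f (N-1) • ∑ i ∈ range N, g i) (f M • ∑ i ∈ range M, g i)
        linarith
  refine htot.trans ?_
  have hπθ : 0 ≤ Real.pi/θ := by positivity
  have : f (N-1) * (Real.pi/θ) + f M * (Real.pi/θ) + (f M - f (N-1)) * (Real.pi/θ)
      = 2 * f M * (Real.pi/θ) := by ring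
  rw [this]
  calc 2 * f M * (Real.pi/θ) ≤ 2 * θ * (Real.pi/θ) := by
        apply mul_le_mul_of_nonneg_right _ hπθ
        linarith
  _ = 2*Real.pi := by field_simp

lemma sinsum_core (N : ℕ) (θ : ℝ) (h0 : 0 ≤ θ) (hπ : θ ≤ Real.pi) :
    |∑ n ∈ Finset.range N, Real.sin (((n:ℝ)+1)*θ)/((n:ℝ)+1)| ≤ 1 + 2*Real.pi := by
  have hpi := Real.pi_pos
  rcases eq_or_lt_of_le h0 with h00 | h0
  · rw [← h00]
    simp only [mul_zero, Real.sin_zero, zero_div, Finset.sum_const_zero, abs_zero]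
    positivity
  set M := min N (Nat.floor (1/θ)) with hM
  have hMN : M ≤ N := min_le_left _ _
  have hsplit := Finset.sum_range_add_sum_Ico
    (fun n => Real.sin (((n:ℝ)+1)*θ)/((n:ℝ)+1)) hMN
  have hA : |∑ n ∈ Finset.range M, Real.sin (((n:ℝ)+1)*θ)/((n:ℝ)+1)| ≤ 1 := by
    calc |∑ n ∈ Finset.range M, Real.sin (((n:ℝ)+1)*θ)/((n:ℝ)+1)|
        ≤ ∑ n ∈ Finset.range M, |Real.sin (((n:ℝ)+1)*θ)/((n:ℝ)+1)| :=
          Finset.abs_sum_le_sum_abs _ _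
      _ ≤ ∑ _n ∈ Finset.range M, θ := by
          refine Finset.sum_le_sum fun n _ => ?_
          rw [abs_div, _root_.abs_of_nonneg (by positivity : (0:ℝ) ≤ (n:ℝ)+1),
            div_le_iff₀ (by positivity)]
          calc |Real.sin (((n:ℝ)+1)*θ)| ≤ |((n:ℝ)+1)*θ| := Real.abs_sin_le_abs
          _ = ((n:ℝ)+1)*θ := _root_.abs_of_nonneg (by positivity)
          _ = θ*((n:ℝ)+1) := by ring
      _ = M * θ := by rw [Finset.sum_const, Finset.card_range]; simp [nsmul_eq_mul]
      _ ≤ 1 := by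
          have h1 : (M:ℝ) ≤ Nat.floor (1/θ) := by
            exact_mod_cast min_le_right N (Nat.floor (1/θ))
          have h2 : (Nat.floor (1/θ) : ℝ) ≤ 1/θ := Nat.floor_le (by positivity)
          rw [← le_div_iff₀ h0]
          linarith
  have hB : |∑ n ∈ Finset.Ico M N, Real.sin (((n:ℝ)+1)*θ)/((n:ℝ)+1)| ≤ 2*Real.pi := by
    rcases eq_or_lt_of_le hMN with hMN' | hMN'
    · rw [← hMN']
      simp [Finset.Ico_self]
      positivity
    · have hMfloor : M = Nat.floor (1/θ) := by
        rcases min_cases N (Nat.floor (1/θ)) with ⟨h1, h2⟩ | ⟨h1, h2⟩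
        · omega
        · omega
      have hMtail : 1/θ ≤ (M:ℝ)+1 := by
        rw [hMfloor]
        exact le_of_lt (Nat.lt_floor_add_one _)
      have him : ∑ n ∈ Finset.Ico M N, Real.sin (((n:ℝ)+1)*θ)/((n:ℝ)+1)
          = (∑ n ∈ Finset.Ico M N,
              (1/((n:ℝ)+1)) • Complex.exp ((((n:ℝ)+1)*θ:ℝ) * Complex.I)).im := by
        rw [Complex.im_sum]
        refine Finset.sum_congr rfl fun n _ => ?_
        rw [Complex.smul_im, Complex.exp_ofReal_mul_I_im, smul_eq_mul]
        ring
      rw [him]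
      calc |(∑ n ∈ Finset.Ico M N,
              (1/((n:ℝ)+1)) • Complex.exp ((((n:ℝ)+1)*θ:ℝ) * Complex.I)).im|
          ≤ ‖∑ n ∈ Finset.Ico M N,
              (1/((n:ℝ)+1)) • Complex.exp ((((n:ℝ)+1)*θ:ℝ) * Complex.I)‖ :=
            Complex.abs_im_le_norm _
        _ ≤ 2*Real.pi := tail_bound θ h0 hπ M N hMN' hMtail
  rw [← hsplit]
  calc |∑ n ∈ Finset.range M, Real.sin (((n:ℝ)+1)*θ)/((n:ℝ)+1)
      + ∑ n ∈ Finset.Ico M N, Real.sin (((n:ℝ)+1)*θ)/((n:ℝ)+1)|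
      ≤ |∑ n ∈ Finset.range M, Real.sin (((n:ℝ)+1)*θ)/((n:ℝ)+1)|
      + |∑ n ∈ Finset.Ico M N, Real.sin (((n:ℝ)+1)*θ)/((n:ℝ)+1)| := abs_add_le _ _
  _ ≤ 1 + 2*Real.pi := add_le_add hA hB

lemma sinsum_bound (N : ℕ) (θ : ℝ) :
    |∑ n ∈ Finset.range N, Real.sin (((n:ℝ)+1)*θ)/((n:ℝ)+1)| ≤ 1 + 2*Real.pi := by
  have hpi := Real.pi_pos
  set k : ℤ := ⌊θ/(2*Real.pi)⌋ with hk
  set θ₁ : ℝ := θ - k*(2*Real.pi) with hθ₁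
  have hfr : 0 ≤ θ₁ ∧ θ₁ < 2*Real.pi := by
    constructor
    · rw [hθ₁, sub_nonneg]
      have h1 : (k:ℝ) ≤ θ/(2*Real.pi) := Int.floor_le _
      have h2 := mul_le_mul_of_nonneg_right h1
        (le_of_lt (by positivity : (0:ℝ) < 2*Real.pi))
      rw [div_mul_cancel₀ _ (by positivity : (2*Real.pi:ℝ) ≠ 0)] at h2
      exact h2
    · rw [hθ₁, sub_lt_iff_lt_add]
      have := Int.lt_floor_add_one (θ/(2*Real.pi))
      calc θ = θ/(2*Real.pi) * (2*Real.pi) := by field_simp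
      _ < ((k:ℝ)+1) * (2*Real.pi) := by
          apply mul_lt_mul_of_pos_right _ (by positivity)
          exact_mod_cast this
      _ = 2*Real.pi + (k:ℝ)*(2*Real.pi) := by ring
  have hshift : ∀ n : ℕ, Real.sin (((n:ℝ)+1)*θ) = Real.sin (((n:ℝ)+1)*θ₁) := by
    intro n
    rw [hθ₁]
    have : ((n:ℝ)+1)*(θ - k*(2*Real.pi))
        = ((n:ℝ)+1)*θ - (((((n:ℤ)+1)*k : ℤ)):ℝ) * (2*Real.pi) := by
      push_cast
      ring
    rw [this, Real.sin_sub_int_mul_two_pi]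
  simp_rw [hshift]
  rcases le_or_gt θ₁ Real.pi with h | h
  · exact sinsum_core N θ₁ hfr.1 h
  · set θ₂ : ℝ := 2*Real.pi - θ₁ with hθ₂
    have hs2 : ∀ n : ℕ, Real.sin (((n:ℝ)+1)*θ₁) = -Real.sin (((n:ℝ)+1)*θ₂) := by
      intro n
      rw [hθ₂]
      have : ((n:ℝ)+1)*(2*Real.pi - θ₁)
          = ((((n:ℤ)+1 : ℤ)):ℝ)*(2*Real.pi) - ((n:ℝ)+1)*θ₁ := by
        push_cast
        ring
      rw [this, Real.sin_int_mul_two_pi_sub]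
      ring
    simp_rw [hs2]
    have : ∑ n ∈ Finset.range N, -Real.sin (((n:ℝ)+1)*θ₂)/((n:ℝ)+1)
        = -∑ n ∈ Finset.range N, Real.sin (((n:ℝ)+1)*θ₂)/((n:ℝ)+1) := by
      rw [← Finset.sum_neg_distrib]
      refine Finset.sum_congr rfl fun n _ => by ring
    rw [this, abs_neg]
    exact sinsum_core N θ₂ (by linarith) (by linarith)


def hsum (N : ℕ) : C(𝕋, ℂ) :=
  ∑ n ∈ Finset.range N, ((1:ℂ)/(n+1)) • (fourier (-(n+1) : ℤ) - fourier ((n+1 : ℕ) : ℤ))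

lemma exp_diff (y : ℝ) :
    Complex.exp (((-y : ℝ):ℂ) * Complex.I) - Complex.exp (((y:ℝ):ℂ) * Complex.I)
      = ((-2 * Real.sin y : ℝ) : ℂ) * Complex.I := by
  rw [Complex.exp_mul_I, Complex.exp_mul_I]
  push_cast
  rw [Complex.cos_neg, Complex.sin_neg, ← Complex.ofReal_sin]
  push_cast
  ring

lemma hsum_apply (N : ℕ) (r : ℝ) :
    (hsum N) (r : 𝕋) = (-2*Complex.I)
      * ((∑ n ∈ Finset.range N, Real.sin (((n:ℝ)+1)*(2*Real.pi*r))/((n:ℝ)+1) : ℝ) : ℂ) := by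
  unfold hsum
  rw [ContinuousMap.sum_apply]
  push_cast [Complex.ofReal_sum]
  rw [Finset.mul_sum]
  refine Finset.sum_congr rfl fun n _ => ?_
  simp only [Pi.smul_apply, Pi.sub_apply]
  have h1 : (fourier (-(n+1) : ℤ)) (r : 𝕋)
      = Complex.exp (((-(((n:ℝ)+1)*(2*Real.pi*r)) : ℝ):ℂ) * Complex.I) := by
    rw [fourier_coe_apply]
    congr 1
    push_cast
    field_simp
  have h2 : (fourier ((n:ℤ)+1)) (r : 𝕋)
      = Complex.exp ((((((n:ℝ)+1)*(2*Real.pi*r)) : ℝ):ℂ) * Complex.I) := by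
    rw [fourier_coe_apply]
    congr 1
    push_cast
    field_simp
  rw [h1, h2, exp_diff]
  rw [smul_eq_mul]
  push_cast
  ring

lemma hsum_norm_le (N : ℕ) : ‖hsum N‖ ≤ 2 * (1 + 2 * Real.pi) := by
  have hpi := Real.pi_pos
  rw [ContinuousMap.norm_le _ (by positivity)]
  intro x
  induction x using QuotientAddGroup.induction_on with
  | H r =>
    rw [hsum_apply N r, norm_mul]
    have h1 : ‖(-2*Complex.I : ℂ)‖ = 2 := by
      simp
    rw [h1]
    have h2 := sinsum_bound N (2*Real.pi*r)
    rw [Complex.norm_real, Real.norm_eq_abs]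
    linarith
lemma integral_fourier (k : ℤ) : (∫ t, fourier k t ∂μT) = if k = 0 then 1 else 0 := by
  split_ifs with h
  · subst h
    have : (fun t : 𝕋 => fourier 0 t) = fun _ => (1 : ℂ) := funext fun t => fourier_zero
    rw [this, integral_const, probReal_univ]
    simp
  · exact integral_eq_zero_of_add_right_eq_neg
      (fourier_add_half_inv_index h (by norm_num : (0:ℝ) < 1))

lemma coeff_fourier (m n : ℤ) :
    fourierCoeff (⇑(fourier m) : 𝕋 → ℂ) n = if n = m then 1 else 0 := by
  unfold fourierCoeff
  have h : ∀ t : 𝕋, fourier (-n) t • fourier m t = fourier (m + -n) t := by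
    intro t; rw [smul_eq_mul, fourier_add, mul_comm]
  simp_rw [h, integral_fourier]
  congr 1
  simp [eq_comm, sub_eq_zero, add_neg_eq_zero]

lemma tconv_fourier (m : ℤ) :
    tconv (⇑(fourier m) : 𝕋 → ℂ) (⇑(fourier m)) = ⇑(fourier m) := by
  funext x
  unfold tconv
  have h : ∀ y : 𝕋, fourier m y * fourier m (x - y) = fourier m x := by
    intro y; rw [← fourier_arg_add, add_sub_cancel]
  simp_rw [h]
  rw [integral_const, probReal_univ]
  simp

lemma tconv_congr {f f' g g' : 𝕋 → ℂ} (hf : f =ᵐ[μT] f') (hg : g =ᵐ[μT] g') :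
    tconv f g = tconv f' g' := by
  funext x
  refine integral_congr_ae ?_
  have h2 : (fun y => g (x - y)) =ᵐ[μT] fun y => g' (x - y) :=
    (Measure.measurePreserving_sub_left μT x).quasiMeasurePreserving.ae_eq hg
  filter_upwards [hf, h2] with y h1 h2
  rw [h1, h2]

lemma tsum_fourier_sq (m : ℤ) :
    ∑' k : ℕ, (fourierCoeff (⇑(fourier m) : 𝕋 → ℂ) (-(k : ℤ))) ^ 2
      = if m ≤ 0 then 1 else 0 := by
  have hc : ∀ k : ℕ, (fourierCoeff (⇑(fourier m) : 𝕋 → ℂ) (-(k : ℤ))) ^ 2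
      = if k = (-m).toNat ∧ m ≤ 0 then 1 else 0 := by
    intro k
    rw [coeff_fourier]
    by_cases h : -(k : ℤ) = m
    · rw [if_pos h, if_pos ⟨by omega, by omega⟩]; norm_num
    · rw [if_neg h, if_neg (by rintro ⟨rfl, hm0⟩; omega)]; norm_num
  simp_rw [hc]
  by_cases hm : m ≤ 0
  · simp only [hm, and_true, if_true]
    exact tsum_ite_eq (-m).toNat 1
  · simp only [hm, and_false, if_false]
    exact tsum_zero

lemma core (Ψ : C(𝕋, ℂ) →L[ℂ] ℂ)
    (hΨ : ∀ m : ℤ, Ψ (fourier m) = if m ≤ 0 then 1 else 0) : False := by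
  have hval : ∀ N : ℕ, Ψ (hsum N) = ((∑ n ∈ Finset.range N, (1:ℝ)/(n+1) : ℝ) : ℂ) := by
    intro N
    unfold hsum
    rw [map_sum]
    push_cast
    refine Finset.sum_congr rfl fun n _ => ?_
    rw [_root_.map_smul, map_sub, hΨ, hΨ, if_pos (by omega), if_neg (by omega)]
    simp
  have hΨnorm : ∀ N : ℕ, ‖Ψ (hsum N)‖ ≤ ‖Ψ‖ * (2 * (1 + 2 * Real.pi)) :=
    fun N => (Ψ.le_opNorm _).trans
      (mul_le_mul_of_nonneg_left (hsum_norm_le N) (norm_nonneg _))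
  have hdiv := Real.tendsto_sum_range_one_div_nat_succ_atTop
  obtain ⟨N, hN⟩ := (hdiv.eventually_gt_atTop (‖Ψ‖ * (2 * (1 + 2 * Real.pi)))).exists
  have h1 : ‖Ψ (hsum N)‖ = ∑ n ∈ Finset.range N, (1:ℝ)/(n+1) := by
    rw [hval, Complex.norm_real, Real.norm_eq_abs, _root_.abs_of_nonneg]
    positivity
  have := hΨnorm N
  rw [h1] at this
  exact absurd hN (not_lt.mpr this)

end S5

open S5

theorem statement5
    (P : Lp ℂ ⊤ (@AddCircle.haarAddCircle 1 _) → ℂ)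
    (hPdef : ∀ f : Lp ℂ ⊤ (@AddCircle.haarAddCircle 1 _),
      P f = ∑' k : ℕ, (fourierCoeff (⇑f) (-(k : ℤ))) ^ 2)
    -- the restriction of `P` to `C(𝕋)`:
    (Pc : C(AddCircle (1 : ℝ), ℂ) → ℂ)
    (hPcdef : ∀ f : C(AddCircle (1 : ℝ), ℂ),
      Pc f = ∑' k : ℕ, (fourierCoeff (⇑f) (-(k : ℤ))) ^ 2) :
    -- `P` is well defined:
    (∀ f : Lp ℂ ⊤ (@AddCircle.haarAddCircle 1 _),
      Summable (fun k : ℕ => ‖(fourierCoeff (⇑f) (-(k : ℤ))) ^ 2‖)) ∧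
    -- `P` is a continuous 2-homogeneous polynomial:
    (∃ φ : Lp ℂ ⊤ (@AddCircle.haarAddCircle 1 _) →L[ℂ]
        Lp ℂ ⊤ (@AddCircle.haarAddCircle 1 _) →L[ℂ] ℂ,
      ∀ f, P f = φ f f) ∧
    -- `P` is orthogonally additive (w.r.t. the convolution product):
    (∀ f g : Lp ℂ ⊤ (@AddCircle.haarAddCircle 1 _),
      tconv (⇑f) (⇑g) =ᵐ[@AddCircle.haarAddCircle 1 _] 0 →
      tconv (⇑g) (⇑f) =ᵐ[@AddCircle.haarAddCircle 1 _] 0 →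
      P (f + g) = P f + P g) ∧
    -- `P` cannot be expressed as `Φ(f ∗ f)` on `L^∞(𝕋)`:
    (¬ ∃ Φ : Lp ℂ ⊤ (@AddCircle.haarAddCircle 1 _) →L[ℂ] ℂ,
      ∀ f h : Lp ℂ ⊤ (@AddCircle.haarAddCircle 1 _),
        (⇑h =ᵐ[@AddCircle.haarAddCircle 1 _] tconv (⇑f) (⇑f)) → P f = Φ h) ∧
    -- nor can its restriction to `C(𝕋)`:
    (¬ ∃ Φ : C(AddCircle (1 : ℝ), ℂ) →L[ℂ] ℂ,
      ∀ f h : C(AddCircle (1 : ℝ), ℂ), ⇑h = tconv (⇑f) (⇑f) → Pc f = Φ h) := by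
  refine ⟨?_, ?_, ?_, ?_, ?_⟩
  · -- well-definedness
    intro f
    simp_rw [norm_pow]
    exact summable_sq_nat f
  · -- 2-homogeneous polynomial
    refine ⟨φB, fun f => ?_⟩
    rw [hPdef f, φB_apply]
    exact tsum_congr fun k => pow_two _
  · -- orthogonal additivity
    intro f g hfg _hgf
    rw [hPdef (f+g), hPdef f, hPdef g]
    have hz : ∀ k : ℕ, fourierCoeff (⇑f) (-(k:ℤ)) * fourierCoeff (⇑g) (-(k:ℤ)) = 0 :=
      fun k => conv_coeff_zero hfg _
    have hterm : ∀ k : ℕ, (fourierCoeff (⇑(f+g)) (-(k:ℤ)))^2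
        = (fourierCoeff (⇑f) (-(k:ℤ)))^2 + (fourierCoeff (⇑g) (-(k:ℤ)))^2 := by
      intro k
      rw [coeff_add f g]
      linear_combination 2 * hz k
    simp_rw [hterm]
    exact Summable.tsum_add ((summable_mul f f).congr fun k => (pow_two _).symm)
      ((summable_mul g g).congr fun k => (pow_two _).symm)
  · -- no linear factorization on L^∞
    rintro ⟨Φ, hΦ⟩
    refine core (Φ.comp (ContinuousMap.toLp (E := ℂ) ⊤ μT ℂ)) fun m => ?_
    have hcoe : ⇑((ContinuousMap.toLp (E := ℂ) ⊤ μT ℂ) (fourier m)) =ᵐ[μT] ⇑(fourier m) :=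
      ContinuousMap.coeFn_toLp _ _
    have hconv : ⇑((ContinuousMap.toLp (E := ℂ) ⊤ μT ℂ) (fourier m))
        =ᵐ[μT] tconv (⇑((ContinuousMap.toLp (E := ℂ) ⊤ μT ℂ) (fourier m)))
          (⇑((ContinuousMap.toLp (E := ℂ) ⊤ μT ℂ) (fourier m))) := by
      rw [tconv_congr hcoe hcoe, tconv_fourier m]
      exact hcoe
    have key := hΦ ((ContinuousMap.toLp (E := ℂ) ⊤ μT ℂ) (fourier m))
      ((ContinuousMap.toLp (E := ℂ) ⊤ μT ℂ) (fourier m)) hconv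
    rw [ContinuousLinearMap.comp_apply, ← key, hPdef]
    have : ∀ k : ℕ, fourierCoeff (⇑((ContinuousMap.toLp (E := ℂ) ⊤ μT ℂ) (fourier m))) (-(k:ℤ))
        = fourierCoeff (⇑(fourier m) : 𝕋 → ℂ) (-(k:ℤ)) :=
      fun k => fourierCoeff_congr hcoe _
    simp_rw [this]
    exact tsum_fourier_sq m
  · -- no linear factorization on C(𝕋)
    rintro ⟨Φ, hΦ⟩
    refine core Φ fun m => ?_
    have key := hΦ (fourier m) (fourier m) (tconv_fourier m).symm
    rw [← key, hPcdef]
    exact tsum_fourier_sq m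

end
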